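/- arXiv:2010.07252 — 2 statements merged into one kernel-verified Lean document; each statement's English description precedes it below -/
import Mathlib

section
/- Let S : ℝ^K → ℝ be a convex nonlinear expectation. The following are equivalent: (i) there exists N ∈ ℝ such that S(a) + N ≥ max_i a_i for all a ∈ ℝ^K; (ii) there exists N ∈ ℝ such that the acceptance set 𝒜_S := {a ∈ ℝ^K : S(a) ≤ 0} is contained in (−∞,N]^K; (iii) there exists a bounded function ℋ : Δ^K → ℝ such that S(a) = sup_{u∈Δ^K}(∑_{i=1}^K u_i a_i + ℋ(u)) for all a ∈ ℝ^K; (iv) writing S^λ_max(a) := λS(a/λ), one has sup_{a∈ℝ^K} |S^λ_max(a) − max_i a_i| → 0 as λ ↓ 0. -/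
noncomputable section

namespace ARC

/-- The maximum of a vector `a : Fin K → ℝ` (needs `0 < K`). -/
def fmax {K : ℕ} (hK : 0 < K) (a : Fin K → ℝ) : ℝ :=
  Finset.univ.sup' ⟨⟨0, hK⟩, Finset.mem_univ _⟩ a

/-- A convex nonlinear expectation: monotone, translation equivariant and convex. -/
def IsConvexNonlinearExpectation {K : ℕ} (S : (Fin K → ℝ) → ℝ) : Prop :=
  Monotone S ∧ (∀ (a : Fin K → ℝ) (c : ℝ), S (fun i => a i + c) = S a + c) ∧
    ConvexOn ℝ Set.univ S

end ARC


noncomputable section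

namespace ARCaux

variable {K : ℕ}

/-- Existence of a subgradient in the simplex for a convex nonlinear expectation. -/
lemma exists_subgradient (S : (Fin K → ℝ) → ℝ) (hmono : Monotone S)
    (htrans : ∀ (a : Fin K → ℝ) (c : ℝ), S (fun i => a i + c) = S a + c)
    (hconv : ConvexOn ℝ Set.univ S) (a : Fin K → ℝ) :
    ∃ u : Fin K → ℝ, (∀ i, 0 ≤ u i) ∧ (∑ i, u i = 1) ∧
      ∀ b, S a + ∑ i, (b i - a i) * u i ≤ S b := by
  classical
  set q : ℝ → (Fin K → ℝ) → ℝ := fun t b => (S (a + t • b) - S a) / t with hq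
  -- slope monotonicity
  have slope : ∀ (b : Fin K → ℝ) (s t : ℝ), 0 < s → s ≤ t → q s b ≤ q t b := by
    intro b s t hs hst
    have ht : 0 < t := lt_of_lt_of_le hs hst
    have hcomb : a + s • b = (s / t) • (a + t • b) + (1 - s / t) • a := by
      funext i
      simp only [Pi.add_apply, Pi.smul_apply, smul_eq_mul]
      field_simp
      ring
    have h1 : 0 ≤ s / t := le_of_lt (div_pos hs ht)
    have h2 : 0 ≤ 1 - s / t := by
      have := (div_le_one ht).2 hst; linarith
    have hc := hconv.2 (Set.mem_univ (a + t • b)) (Set.mem_univ a) h1 h2 (by ring)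
    rw [← hcomb] at hc
    have key : S (a + s • b) ≤ (s / t) * S (a + t • b) + (1 - s / t) * S a := by
      simpa [smul_eq_mul] using hc
    show (S (a + s • b) - S a) / s ≤ (S (a + t • b) - S a) / t
    rw [div_le_div_iff₀ hs ht]
    have key2 := key
    field_simp [ht.ne'] at key2
    nlinarith [key2]
  -- lower bound
  have lower : ∀ (b : Fin K → ℝ) (t : ℝ), 0 < t → S a - S (a - b) ≤ q t b := by
    intro b t ht
    have h1t : (0:ℝ) < 1 + t := by linarith
    have hcomb : a = (1 / (1 + t)) • (a + t • b) + (t / (1 + t)) • (a - b) := by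
      funext i
      simp only [Pi.add_apply, Pi.smul_apply, Pi.sub_apply, smul_eq_mul]
      field_simp
      ring
    have hc := hconv.2 (Set.mem_univ (a + t • b)) (Set.mem_univ (a - b))
      (show (0:ℝ) ≤ 1/(1+t) by positivity)
      (show (0:ℝ) ≤ t/(1+t) by positivity)
      (show 1/(1+t) + t/(1+t) = 1 by
        rw [← add_div]; exact div_self h1t.ne')
    rw [← hcomb] at hc
    have key : S a ≤ (1 / (1 + t)) * S (a + t • b) + (t / (1 + t)) * S (a - b) := by
      simpa [smul_eq_mul] using hc
    show S a - S (a - b) ≤ (S (a + t • b) - S a) / t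
    rw [le_div_iff₀ ht]
    have key2 := key
    field_simp [h1t.ne'] at key2
    nlinarith [key2]
  set Q : (Fin K → ℝ) → Set ℝ := fun b => {x | ∃ t, 0 < t ∧ x = q t b} with hQ
  have hQne : ∀ b, (Q b).Nonempty := fun b => ⟨q 1 b, 1, one_pos, rfl⟩
  have hQbdd : ∀ b, BddBelow (Q b) :=
    fun b => ⟨S a - S (a - b), by rintro x ⟨t, ht, rfl⟩; exact lower b t ht⟩
  set p : (Fin K → ℝ) → ℝ := fun b => sInf (Q b) with hp
  have hp_le : ∀ b t, 0 < t → p b ≤ q t b := fun b t ht =>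
    csInf_le (hQbdd b) ⟨t, ht, rfl⟩
  have hp_lb : ∀ b, S a - S (a - b) ≤ p b := by
    intro b
    apply le_csInf (hQne b)
    rintro x ⟨t, ht, rfl⟩; exact lower b t ht
  have hq_smul : ∀ (b : Fin K → ℝ) (c t : ℝ), 0 < c → 0 < t →
      q t (c • b) = c * q (t * c) b := by
    intro b c t hc ht
    have he : a + t • (c • b) = a + (t * c) • b := by
      funext i
      simp only [Pi.add_apply, Pi.smul_apply, smul_eq_mul]
      ring
    show (S (a + t • (c • b)) - S a) / t = c * ((S (a + (t * c) • b) - S a) / (t * c))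
    rw [he]
    field_simp
  have hp_smul : ∀ (c : ℝ), 0 < c → ∀ b, p (c • b) = c * p b := by
    intro c hc b
    apply le_antisymm
    · have hdiv : p (c • b) / c ≤ p b := by
        apply le_csInf (hQne b)
        rintro x ⟨t, ht, rfl⟩
        rw [div_le_iff₀ hc]
        have h := hp_le (c • b) (t / c) (div_pos ht hc)
        rw [hq_smul b c (t/c) hc (div_pos ht hc), div_mul_cancel₀ t hc.ne'] at h
        linarith
      calc p (c • b) = (p (c • b) / c) * c := by field_simp
        _ ≤ p b * c := mul_le_mul_of_nonneg_right hdiv hc.le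
        _ = c * p b := mul_comm _ _
    · apply le_csInf (hQne (c • b))
      rintro x ⟨t, ht, rfl⟩
      rw [hq_smul b c t hc ht]
      exact mul_le_mul_of_nonneg_left (hp_le b (t*c) (mul_pos ht hc)) hc.le
  have hq_add : ∀ (b b' : Fin K → ℝ) (t : ℝ), 0 < t →
      q t (b + b') ≤ q (2*t) b + q (2*t) b' := by
    intro b b' t ht
    have hcomb : a + t • (b + b') =
        (1/2 : ℝ) • (a + (2*t) • b) + (1/2 : ℝ) • (a + (2*t) • b') := by
      funext i
      simp only [Pi.add_apply, Pi.smul_apply, smul_eq_mul]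
      ring
    have hc := hconv.2 (Set.mem_univ (a + (2*t) • b)) (Set.mem_univ (a + (2*t) • b'))
      (by norm_num : (0:ℝ) ≤ 1/2) (by norm_num : (0:ℝ) ≤ 1/2) (by norm_num)
    rw [← hcomb] at hc
    have key : S (a + t • (b + b')) ≤
        (1/2) * S (a + (2*t) • b) + (1/2) * S (a + (2*t) • b') := by
      simpa [smul_eq_mul] using hc
    show (S (a + t • (b + b')) - S a) / t ≤
      (S (a + (2*t) • b) - S a) / (2*t) + (S (a + (2*t) • b') - S a) / (2*t)
    have h2t : (0:ℝ) < 2 * t := by linarith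
    rw [← add_div, div_le_div_iff₀ ht h2t]
    nlinarith [key]
  have hp_add : ∀ b b', p (b + b') ≤ p b + p b' := by
    intro b b'
    have key : ∀ x ∈ Q b, ∀ y ∈ Q b', p (b + b') ≤ x + y := by
      rintro x ⟨s, hs, rfl⟩ y ⟨t, ht, rfl⟩
      set r := min s t with hr
      have hr0 : 0 < r := lt_min hs ht
      have h1 : p (b + b') ≤ q (r/2) (b + b') := hp_le _ _ (by positivity)
      have h2 : q (r/2) (b + b') ≤ q (2*(r/2)) b + q (2*(r/2)) b' :=
        hq_add b b' _ (by positivity)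
      have hrr : 2*(r/2) = r := by ring
      rw [hrr] at h2
      have h3 : q r b ≤ q s b := slope b r s hr0 (min_le_left s t)
      have h4 : q r b' ≤ q t b' := slope b' r t hr0 (min_le_right s t)
      linarith
    have step1 : ∀ y ∈ Q b', p (b + b') - y ≤ p b := by
      intro y hy
      apply le_csInf (hQne b)
      intro x hx
      linarith [key x hx y hy]
    have step2 : ∀ y ∈ Q b', p (b + b') - p b ≤ y := by
      intro y hy; linarith [step1 y hy]
    linarith [le_csInf (hQne b') step2]
  -- Hahn-Banach
  obtain ⟨g, -, hg⟩ := exists_extension_of_le_sublinear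
    (LinearMap.toPMap (0 : (Fin K → ℝ) →ₗ[ℝ] ℝ) ⊥) p
    (fun c hc x => hp_smul c hc x) hp_add
    (by
      rintro ⟨x, hx⟩
      have hx0 : x = 0 := by simpa using hx
      subst hx0
      have hlow := hp_lb 0
      rw [sub_zero, sub_self] at hlow
      show (0 : ℝ) ≤ p 0
      exact hlow)
  -- The subgradient
  have hgb : ∀ b, g b ≤ S (a + b) - S a := by
    intro b
    have h := (hg b).trans (hp_le b 1 one_pos)
    have h1 : q 1 b = S (a + b) - S a := by
      show (S (a + (1:ℝ) • b) - S a) / 1 = _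
      rw [one_smul, div_one]
    rw [h1] at h
    exact h
  set u : Fin K → ℝ := fun i => g (fun j => if i = j then 1 else 0) with hu
  have hsum_repr : ∀ b, g b = ∑ i, b i * u i := by
    intro b
    rw [LinearMap.pi_apply_eq_sum_univ g b]
    simp only [hu, smul_eq_mul]
  refine ⟨u, ?_, ?_, ?_⟩
  · intro i
    have hle : (a + -(fun j => if i = j then (1:ℝ) else 0)) ≤ a := by
      intro j
      simp only [Pi.add_apply, Pi.neg_apply]
      by_cases h : i = j
      · rw [if_pos h]; linarith
      · rw [if_neg h]; simp
    have h1 : g (-(fun j => if i = j then (1:ℝ) else 0)) ≤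
        S (a + -(fun j => if i = j then (1:ℝ) else 0)) - S a := hgb _
    have h2 : S (a + -(fun j => if i = j then (1:ℝ) else 0)) ≤ S a := hmono hle
    rw [map_neg] at h1
    have : -(u i) ≤ 0 := by
      simp only [hu]
      linarith
    linarith
  · have h1 : g (fun _ => (1:ℝ)) ≤ 1 := by
      have h := hgb (fun _ => (1:ℝ))
      have he : a + (fun _ => (1:ℝ)) = fun i => a i + 1 := rfl
      rw [he, htrans a 1] at h
      linarith
    have h2 : g (-(fun _ => (1:ℝ))) ≤ -1 := by
      have h := hgb (-(fun _ => (1:ℝ)))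
      have he : a + -(fun _ => (1:ℝ)) = fun i => a i + (-1) := rfl
      rw [he, htrans a (-1)] at h
      linarith
    rw [map_neg] at h2
    have hone : g (fun _ => (1:ℝ)) = 1 := le_antisymm h1 (by linarith)
    have hsum : ∑ i, u i = g (fun _ => (1:ℝ)) := by
      rw [hsum_repr (fun _ => (1:ℝ))]
      simp
    rw [hsum, hone]
  · intro b
    have h := hgb (b - a)
    rw [hsum_repr (b - a)] at h
    have he : a + (b - a) = b := by abel
    rw [he] at h
    simp only [Pi.sub_apply] at h
    linarith

end ARCaux

namespace ARCaux

lemma le_fmax {K : ℕ} (hK : 0 < K) (a : Fin K → ℝ) (i : Fin K) :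
    a i ≤ ARC.fmax hK a :=
  Finset.le_sup' a (Finset.mem_univ i)

lemma fmax_le {K : ℕ} (hK : 0 < K) (a : Fin K → ℝ) {c : ℝ} (h : ∀ i, a i ≤ c) :
    ARC.fmax hK a ≤ c :=
  Finset.sup'_le _ a fun i _ => h i

lemma exists_eq_fmax {K : ℕ} (hK : 0 < K) (a : Fin K → ℝ) :
    ∃ j, ARC.fmax hK a = a j := by
  obtain ⟨j, -, hj⟩ := Finset.exists_mem_eq_sup' (⟨⟨0, hK⟩, Finset.mem_univ _⟩ :
    (Finset.univ : Finset (Fin K)).Nonempty) a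
  exact ⟨j, hj⟩

lemma fmax_smul {K : ℕ} (hK : 0 < K) (a : Fin K → ℝ) {c : ℝ} (hc : 0 ≤ c) :
    ARC.fmax hK (c • a) = c * ARC.fmax hK a := by
  apply le_antisymm
  · apply fmax_le
    intro i
    have := le_fmax hK a i
    calc (c • a) i = c * a i := rfl
      _ ≤ c * ARC.fmax hK a := mul_le_mul_of_nonneg_left this hc
  · obtain ⟨j, hj⟩ := exists_eq_fmax hK a
    rw [hj]
    exact le_fmax hK (c • a) j

lemma sum_le_fmax {K : ℕ} (hK : 0 < K) (a u : Fin K → ℝ)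
    (hu : u ∈ stdSimplex ℝ (Fin K)) : ∑ i, u i * a i ≤ ARC.fmax hK a := by
  calc ∑ i, u i * a i ≤ ∑ i, u i * ARC.fmax hK a := by
        apply Finset.sum_le_sum
        intro i _
        exact mul_le_mul_of_nonneg_left (le_fmax hK a i) (hu.1 i)
    _ = ARC.fmax hK a := by rw [← Finset.sum_mul, hu.2, one_mul]

lemma single_mem_stdSimplex {K : ℕ} (j : Fin K) :
    (fun i => if i = j then (1:ℝ) else 0) ∈ stdSimplex ℝ (Fin K) := by
  constructor
  · intro i; dsimp only; split <;> norm_num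
  · simp

end ARCaux

/-- Theorem 5.4: for a convex nonlinear expectation `S`, the following are equivalent:
(i) `S + N` dominates the max; (ii) the acceptance set is contained in `(-∞,N]^K`;
(iii) `S` is represented by a bounded entropy on the simplex; (iv) `λS(·/λ)` converges
uniformly to the max as `λ ↓ 0`. -/
theorem ARC.equivalence_to_boundedness {K : ℕ} (hK : 0 < K)
    (S : (Fin K → ℝ) → ℝ) (hS : ARC.IsConvexNonlinearExpectation S) :
    List.TFAE
      [∃ N : ℝ, ∀ a : Fin K → ℝ, ARC.fmax hK a ≤ S a + N,
       ∃ N : ℝ, ∀ a : Fin K → ℝ, S a ≤ 0 → ∀ i, a i ≤ N,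
       ∃ Ent : (Fin K → ℝ) → ℝ, (∃ C : ℝ, ∀ u ∈ stdSimplex ℝ (Fin K), |Ent u| ≤ C) ∧
         ∀ a, S a = ⨆ u : stdSimplex ℝ (Fin K), (∑ i, (u : Fin K → ℝ) i * a i + Ent u),
       ∀ ε > (0 : ℝ), ∃ δ > (0 : ℝ), ∀ lam : ℝ, 0 < lam → lam < δ →
         ∀ a : Fin K → ℝ, |lam * S (lam⁻¹ • a) - ARC.fmax hK a| ≤ ε] := by
  classical
  obtain ⟨hmono, htrans, hconv⟩ := hS
  have hne : Nonempty (stdSimplex ℝ (Fin K)) :=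
    ⟨⟨_, ARCaux.single_mem_stdSimplex ⟨0, hK⟩⟩⟩
  tfae_have 1 → 2 := by
    rintro ⟨N, hN⟩
    exact ⟨N, fun a ha i => (ARCaux.le_fmax hK a i).trans ((hN a).trans (by linarith))⟩
  tfae_have 2 → 1 := by
    rintro ⟨N, hN⟩
    refine ⟨N, fun a => ?_⟩
    have h0 : S (fun i => a i + (-(S a))) = 0 := by rw [htrans]; ring
    have := hN _ (le_of_eq h0)
    apply ARCaux.fmax_le
    intro i
    have := this i
    linarith
  tfae_have 1 → 3 := by
    rintro ⟨N, hN⟩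
    set E : (Fin K → ℝ) → Set ℝ := fun u => {x | ∃ b, x = S b - ∑ i, u i * b i} with hE
    set Ent : (Fin K → ℝ) → ℝ := fun u => sInf (E u) with hEnt
    have hEne : ∀ u, (E u).Nonempty := fun u => ⟨S 0 - ∑ i, u i * 0, 0, rfl⟩
    have hEbdd : ∀ u ∈ stdSimplex ℝ (Fin K), BddBelow (E u) := by
      intro u hu
      refine ⟨-N, ?_⟩
      rintro x ⟨b, rfl⟩
      have h1 := ARCaux.sum_le_fmax hK b u hu
      have h2 := hN b
      linarith
    have hEnt_le : ∀ u, ∀ b, u ∈ stdSimplex ℝ (Fin K) → Ent u ≤ S b - ∑ i, u i * b i :=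
      fun u b hu => csInf_le (hEbdd u hu) ⟨b, rfl⟩
    have hEnt_lb : ∀ u ∈ stdSimplex ℝ (Fin K), -N ≤ Ent u := by
      intro u hu
      apply le_csInf (hEne u)
      rintro x ⟨b, rfl⟩
      have h1 := ARCaux.sum_le_fmax hK b u hu
      have h2 := hN b
      linarith
    have hEnt_ub : ∀ u, u ∈ stdSimplex ℝ (Fin K) → Ent u ≤ S 0 := by
      intro u hu
      have := hEnt_le u 0 hu
      simpa using this
    refine ⟨Ent, ⟨max |N| |S 0|, ?_⟩, ?_⟩
    · intro u hu
      rw [abs_le]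
      constructor
      · have := hEnt_lb u hu
        have : -|N| ≤ Ent u := by
          have hN' : -|N| ≤ -N := by simp [neg_le_neg_iff]; exact neg_abs_le N |>.trans (le_abs_self N) |> fun _ => le_abs_self N
          linarith [neg_abs_le N, le_abs_self N]
        calc -max |N| |S 0| ≤ -|N| := by simp [le_max_left]
          _ ≤ Ent u := this
      · calc Ent u ≤ S 0 := hEnt_ub u hu
          _ ≤ |S 0| := le_abs_self _
          _ ≤ max |N| |S 0| := le_max_right _ _
    · intro a
      -- upper bound: every term is ≤ S a
      have hterm : ∀ u : stdSimplex ℝ (Fin K),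
          ∑ i, (u : Fin K → ℝ) i * a i + Ent u ≤ S a := by
        rintro ⟨u, hu⟩
        have := hEnt_le u a hu
        show ∑ i, u i * a i + Ent u ≤ S a
        linarith
      have hbdd : BddAbove (Set.range fun u : stdSimplex ℝ (Fin K) =>
          ∑ i, (u : Fin K → ℝ) i * a i + Ent u) := by
        refine ⟨S a, ?_⟩
        rintro x ⟨u, rfl⟩
        exact hterm u
      apply le_antisymm
      · -- S a ≤ sup, via subgradient
        obtain ⟨u, hu0, hu1, hsub⟩ := ARCaux.exists_subgradient S hmono htrans hconv a
        have humem : u ∈ stdSimplex ℝ (Fin K) := ⟨hu0, hu1⟩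
        have hEu : S a - ∑ i, u i * a i ≤ Ent u := by
          apply le_csInf (hEne u)
          rintro x ⟨b, rfl⟩
          have := hsub b
          have hsplit : ∑ i, (b i - a i) * u i = ∑ i, u i * b i - ∑ i, u i * a i := by
            rw [← Finset.sum_sub_distrib]
            apply Finset.sum_congr rfl
            intro i _
            ring
          rw [hsplit] at this
          linarith
        have : S a ≤ ∑ i, u i * a i + Ent u := by linarith
        exact this.trans (le_ciSup hbdd ⟨u, humem⟩)
      · exact ciSup_le hterm
  tfae_have 3 → 4 := by
    rintro ⟨Ent, ⟨C, hC⟩, hrep⟩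
    intro ε hε
    have hC0 : 0 ≤ C := by
      obtain ⟨u⟩ := hne
      exact (abs_nonneg _).trans (hC u.1 u.2)
    refine ⟨ε / (C + 1), by positivity, ?_⟩
    intro lam hlam hlamδ a
    set M := ARC.fmax hK a with hM
    have hterm : ∀ u : stdSimplex ℝ (Fin K),
        ∑ i, (u : Fin K → ℝ) i * (lam⁻¹ • a) i + Ent u ≤ lam⁻¹ * M + C := by
      rintro ⟨u, hu⟩
      have h1 : ∑ i, u i * (lam⁻¹ • a) i = lam⁻¹ * ∑ i, u i * a i := by
        rw [Finset.mul_sum]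
        apply Finset.sum_congr rfl
        intro i _
        simp [smul_eq_mul]
        ring
      have h2 : ∑ i, u i * a i ≤ M := ARCaux.sum_le_fmax hK a u hu
      have h3 : Ent u ≤ C := (abs_le.1 (hC u hu)).2
      have hinv : (0:ℝ) ≤ lam⁻¹ := by positivity
      show ∑ i, u i * (lam⁻¹ • a) i + Ent u ≤ lam⁻¹ * M + C
      rw [h1]
      have := mul_le_mul_of_nonneg_left h2 hinv
      linarith
    have hbdd : BddAbove (Set.range fun u : stdSimplex ℝ (Fin K) =>
        ∑ i, (u : Fin K → ℝ) i * (lam⁻¹ • a) i + Ent u) := by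
      refine ⟨lam⁻¹ * M + C, ?_⟩
      rintro x ⟨u, rfl⟩
      exact hterm u
    have hup : S (lam⁻¹ • a) ≤ lam⁻¹ * M + C := by
      rw [hrep]
      exact ciSup_le hterm
    have hlo : lam⁻¹ * M - C ≤ S (lam⁻¹ • a) := by
      obtain ⟨j, hj⟩ := ARCaux.exists_eq_fmax hK a
      set u : Fin K → ℝ := fun i => if i = j then (1:ℝ) else 0 with hudef
      have humem : u ∈ stdSimplex ℝ (Fin K) := ARCaux.single_mem_stdSimplex j
      have hsum : ∑ i, u i * (lam⁻¹ • a) i = lam⁻¹ * a j := by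
        rw [Finset.sum_eq_single j]
        · simp [hudef, smul_eq_mul]
        · intro i _ hij
          simp [hudef, hij]
        · intro h; exact absurd (Finset.mem_univ j) h
      have hle : lam⁻¹ * M - C ≤ ∑ i, u i * (lam⁻¹ • a) i + Ent u := by
        rw [hsum, ← hj]
        linarith [(abs_le.1 (hC u humem)).1]
      rw [hrep]
      exact hle.trans (le_ciSup hbdd ⟨u, humem⟩)
    have key : |lam * S (lam⁻¹ • a) - M| ≤ lam * C := by
      rw [abs_le]
      constructor
      · have := mul_le_mul_of_nonneg_left hlo hlam.le
        rw [mul_sub, ← mul_assoc, mul_inv_cancel₀ hlam.ne', one_mul] at this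
        linarith
      · have := mul_le_mul_of_nonneg_left hup hlam.le
        rw [mul_add, ← mul_assoc, mul_inv_cancel₀ hlam.ne', one_mul] at this
        linarith
    have hlamC : lam * C ≤ ε := by
      have h1 : lam * C ≤ (ε / (C + 1)) * C := mul_le_mul_of_nonneg_right hlamδ.le hC0
      have h2 : (ε / (C + 1)) * C ≤ ε := by
        rw [div_mul_eq_mul_div, div_le_iff₀ (by linarith : (0:ℝ) < C + 1)]
        nlinarith
      linarith
    exact key.trans hlamC
  tfae_have 4 → 1 := by
    intro h4
    obtain ⟨δ, hδ, hδ'⟩ := h4 1 one_pos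
    set lam := δ / 2 with hlam
    have hlam0 : 0 < lam := by positivity
    have hlamδ : lam < δ := by
      rw [hlam]; linarith
    refine ⟨1 / lam, fun a => ?_⟩
    have h := hδ' lam hlam0 hlamδ (lam • a)
    have he : lam⁻¹ • lam • a = a := by
      rw [smul_smul, inv_mul_cancel₀ hlam0.ne', one_smul]
    rw [he, ARCaux.fmax_smul hK a hlam0.le] at h
    have h1 := (abs_le.1 h).1
    have h2 : lam * (ARC.fmax hK a - S a) ≤ 1 := by nlinarith [(abs_le.1 h).1]
    have : ARC.fmax hK a - S a ≤ 1 / lam := by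
      rw [le_div_iff₀ hlam0]
      linarith [h2, mul_comm lam (ARC.fmax hK a - S a)]
    linarith
  tfae_finish
end
end
end

section
/- Every convex nonlinear expectation S : ℝ^K → ℝ admits the robust representation S(a) = sup_{u∈Δ^K}(∑_{i=1}^K u_i a_i + ℋ_max(u)) for all a ∈ ℝ^K, where ℋ_max(u) := −sup_{a∈𝒜_S} ∑_{i=1}^K u_i a_i is valued in [−∞,∞) and 𝒜_S := {a ∈ ℝ^K : S(a) ≤ 0} is the acceptance set (terms with ℋ_max(u) = −∞ contribute −∞ to the supremum). -/
noncomputable section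

namespace ARC

/-- The maximal representing (entropy) function `ℋ_max(u) = -sup_{a ∈ 𝒜_S} ∑ u_i a_i`,
valued in `[-∞, ∞)` (as an extended real). -/
def Hmax {K : ℕ} (S : (Fin K → ℝ) → ℝ) (u : Fin K → ℝ) : EReal :=
  -(⨆ a : {a : Fin K → ℝ // S a ≤ 0}, ((∑ i, u i * a.1 i : ℝ) : EReal))

end ARC

/-- Separation step: for every `ε > 0` there is an affine minorant of `S`
that is `ε`-tight at `a`, with coefficients in the simplex. -/
theorem ARC.exists_affine_minorant {K : ℕ}
    (S : (Fin K → ℝ) → ℝ) (hmono : Monotone S)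
    (htrans : ∀ (a : Fin K → ℝ) (c : ℝ), S (fun i => a i + c) = S a + c)
    (hconv : ConvexOn ℝ Set.univ S) (a : Fin K → ℝ) {ε : ℝ} (hε : 0 < ε) :
    ∃ (u : Fin K → ℝ) (β : ℝ), (∀ i, 0 ≤ u i) ∧ (∑ i, u i) = 1 ∧
      (∀ b, (∑ i, u i * b i) + β ≤ S b) ∧ S a - ε < (∑ i, u i * a i) + β := by
  have hcont : Continuous S := by
    rw [← continuousOn_univ]
    simpa using hconv.continuousOn_interior
  set epi : Set ((Fin K → ℝ) × ℝ) := {p | S p.1 ≤ p.2} with hepi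
  have hepiconv : Convex ℝ epi := by
    have := hconv.convex_epigraph
    simpa [epi, Set.setOf_and] using this
  have hepiclosed : IsClosed epi :=
    isClosed_le (hcont.comp continuous_fst) continuous_snd
  have hnotmem : (a, S a - ε) ∉ epi := by
    simp only [epi, Set.mem_setOf_eq, not_le]
    linarith
  obtain ⟨f, c, hfx, hfepi⟩ :=
    geometric_hahn_banach_point_closed hepiconv hepiclosed hnotmem
  set s : ℝ := f (0, 1) with hs
  set φ : Fin K → ℝ := fun i => f ((fun j => if i = j then 1 else 0), 0) with hφ
  have hdecomp : ∀ (b : Fin K → ℝ) (t : ℝ),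
      f (b, t) = (∑ i, b i * φ i) + t * s := by
    intro b t
    have h1 : (b, t) = ((b, (0:ℝ)) : (Fin K → ℝ) × ℝ) + t • (((0 : Fin K → ℝ), (1:ℝ)) : (Fin K → ℝ) × ℝ) := by
      ext j <;> simp
    rw [h1, map_add, map_smul]
    have h2 : f (b, (0:ℝ)) = ∑ i, b i * φ i := by
      have h3 := LinearMap.pi_apply_eq_sum_univ
        ((f.toLinearMap).comp (LinearMap.inl ℝ (Fin K → ℝ) ℝ)) b
      simpa [smul_eq_mul, hφ] using h3
    rw [h2]
    simp [hs, smul_eq_mul]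
  -- f at points of the epigraph and at the separated point
  have hepi_ineq : ∀ b : Fin K → ℝ, c < (∑ i, b i * φ i) + S b * s := by
    intro b
    have hmem : (b, S b) ∈ epi := by simp [epi]
    have := hfepi _ hmem
    rwa [hdecomp] at this
  have hax : (∑ i, a i * φ i) + (S a - ε) * s < c := by
    have := hfx; rwa [hdecomp] at this
  have hspos : 0 < s := by
    have h1 := hepi_ineq a
    nlinarith
  set u : Fin K → ℝ := fun i => -(φ i) / s with hu
  set β : ℝ := c / s with hβ
  have husum : ∀ b : Fin K → ℝ, ∑ i, u i * b i = -(∑ i, b i * φ i) / s := by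
    intro b
    rw [eq_div_iff hspos.ne', Finset.sum_mul, ← Finset.sum_neg_distrib]
    refine Finset.sum_congr rfl fun i _ => ?_
    simp only [hu]
    rw [div_mul_eq_mul_div, div_mul_cancel₀ _ hspos.ne']
    ring
  have hkey : ∀ b, (∑ i, u i * b i) + β ≤ S b := by
    intro b
    have h1 := hepi_ineq b
    rw [husum, hβ, ← add_div, div_le_iff₀ hspos]
    nlinarith
  have htight : S a - ε < (∑ i, u i * a i) + β := by
    rw [husum, hβ, ← add_div, lt_div_iff₀ hspos]
    nlinarith
  refine ⟨u, β, ?_, ?_, hkey, htight⟩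
  · -- nonnegativity
    intro i
    by_contra hui
    push_neg at hui
    set M : ℝ := (S a - β - (∑ j, u j * a j) + 1) / (-u i) with hM
    have hMpos : 0 < M := by
      have := hkey a
      apply div_pos <;> linarith
    set b : Fin K → ℝ := fun j => a j - M * (if i = j then 1 else 0) with hb
    have hble : b ≤ a := by
      intro j
      simp only [hb]
      rcases eq_or_ne i j with rfl | hne
      · simp; nlinarith
      · simp [hne]
    have h1 : (∑ j, u j * b j) + β ≤ S a := (hkey b).trans (hmono hble)
    have hsum : ∑ j, u j * b j = (∑ j, u j * a j) - M * u i := by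
      simp only [hb, mul_sub, mul_ite, mul_one, mul_zero, Finset.sum_sub_distrib]
      congr 1
      rw [Finset.sum_ite_eq]
      simp [mul_comm]
    rw [hsum] at h1
    have : -(M * u i) = S a - β - (∑ j, u j * a j) + 1 := by
      rw [hM]; field_simp
      exact mul_div_cancel_right₀ _ hui.ne
    linarith
  · -- sums to one
    by_contra hT
    set T : ℝ := ∑ i, u i with hTdef
    set C : ℝ := S a - β - (∑ j, u j * a j) with hC
    have hall : ∀ c' : ℝ, c' * (T - 1) ≤ C := by
      intro c'
      have h1 := hkey (fun j => a j + c')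
      rw [htrans a c'] at h1
      have hsum : ∑ j, u j * (a j + c') = (∑ j, u j * a j) + c' * T := by
        rw [hTdef, Finset.mul_sum, ← Finset.sum_add_distrib]
        exact Finset.sum_congr rfl fun j _ => by ring
      rw [hsum] at h1
      simp only [hC]; linarith
    have hne : T - 1 ≠ 0 := sub_ne_zero.2 hT
    have := hall ((C + 1) / (T - 1))
    rw [div_mul_cancel₀ _ hne] at this
    linarith

/-- Theorem A.1 (robust representation): every convex nonlinear expectation satisfies
`S(a) = sup_{u ∈ Δ^K} (∑ u_i a_i + ℋ_max(u))`, where terms with `ℋ_max(u) = -∞`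
contribute `-∞` to the supremum (computed in the extended reals). -/
theorem ARC.robust_representation {K : ℕ}
    (S : (Fin K → ℝ) → ℝ) (hS : ARC.IsConvexNonlinearExpectation S) :
    ∀ a : Fin K → ℝ,
      (S a : EReal) =
        ⨆ u : stdSimplex ℝ (Fin K),
          (((∑ i, (u : Fin K → ℝ) i * a i : ℝ) : EReal) + ARC.Hmax S u) := by
  obtain ⟨hmono, htrans, hconv⟩ := hS
  intro a
  apply le_antisymm
  · -- S a ≤ sup
    by_contra hlt
    push_neg at hlt
    obtain ⟨r, hr1, hr2⟩ := EReal.lt_iff_exists_real_btwn.1 hlt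
    have hε : 0 < S a - r := by
      have := EReal.coe_lt_coe_iff.1 hr2; linarith
    obtain ⟨u, β, hpos, hsum, hkey, htight⟩ :=
      ARC.exists_affine_minorant S hmono htrans hconv a hε
    have humem : u ∈ stdSimplex ℝ (Fin K) := ⟨hpos, hsum⟩
    -- Hmax S u ≥ β
    have hHmax : (β : EReal) ≤ ARC.Hmax S u := by
      rw [ARC.Hmax, ← EReal.neg_le_neg_iff, neg_neg, ← EReal.coe_neg]
      apply iSup_le
      rintro ⟨b, hb⟩
      rw [EReal.coe_le_coe_iff]
      have := hkey b
      linarith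
    have hterm : (r : EReal) ≤ ((∑ i, u i * a i : ℝ) : EReal) + ARC.Hmax S u := by
      calc (r : EReal) ≤ (((∑ i, u i * a i) + β : ℝ) : EReal) := by
            rw [EReal.coe_le_coe_iff]; linarith
        _ = ((∑ i, u i * a i : ℝ) : EReal) + (β : EReal) := EReal.coe_add _ _
        _ ≤ _ := add_le_add_right hHmax _
    have : (r : EReal) ≤ ⨆ u : stdSimplex ℝ (Fin K),
        (((∑ i, (u : Fin K → ℝ) i * a i : ℝ) : EReal) + ARC.Hmax S u) :=
      hterm.trans (le_iSup (fun u : stdSimplex ℝ (Fin K) =>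
        (((∑ i, (u : Fin K → ℝ) i * a i : ℝ) : EReal) + ARC.Hmax S u)) ⟨u, humem⟩)
    exact absurd (hr1.trans_le this) (lt_irrefl _)
  · -- sup ≤ S a
    apply iSup_le
    rintro ⟨u, hu0, hu1⟩
    -- witness b₀ = a - S a • 1 is acceptable
    have hb₀ : S (fun i => a i - S a) ≤ 0 := by
      have := htrans a (-(S a))
      simp only [← sub_eq_add_neg] at this
      rw [this]; linarith
    have hwit : ((∑ i, u i * a i - S a : ℝ) : EReal) ≤
        ⨆ b : {b : Fin K → ℝ // S b ≤ 0}, ((∑ i, u i * b.1 i : ℝ) : EReal) := by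
      have : ((∑ i, u i * (a i - S a) : ℝ) : EReal) ≤
          ⨆ b : {b : Fin K → ℝ // S b ≤ 0}, ((∑ i, u i * b.1 i : ℝ) : EReal) :=
        le_iSup (fun b : {b : Fin K → ℝ // S b ≤ 0} =>
          ((∑ i, u i * b.1 i : ℝ) : EReal)) ⟨fun i => a i - S a, hb₀⟩
      convert this using 3
      simp only [mul_sub, Finset.sum_sub_distrib, ← Finset.sum_mul, hu1, one_mul]
    have hneg : ARC.Hmax S u ≤ ((S a - ∑ i, u i * a i : ℝ) : EReal) := by
      rw [ARC.Hmax, show ((S a - ∑ i, u i * a i : ℝ) : EReal) =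
        -(((∑ i, u i * a i - S a : ℝ)) : EReal) by rw [← EReal.coe_neg]; norm_num]
      exact EReal.neg_le_neg_iff.2 hwit
    calc ((∑ i, u i * a i : ℝ) : EReal) + ARC.Hmax S u
        ≤ ((∑ i, u i * a i : ℝ) : EReal) + ((S a - ∑ i, u i * a i : ℝ) : EReal) :=
          add_le_add_right hneg _
      _ = ((S a : ℝ) : EReal) := by rw [← EReal.coe_add]; norm_num
end
end
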